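/- arXiv:1809.07372 — 4 statements merged into one kernel-verified Lean document; each statement's English description precedes it below -/
import Mathlib

section
/- The determinant of the Vieta matrix of n complex numbers a_1, …, a_n equals the product ∏_{1 ≤ i < k ≤ n} (a_i − a_k). -/
open Finset Matrix Polynomial

private lemma erase_split {n : ℕ} (j : Fin n) :
    (Finset.univ : Finset (Fin n)).erase j = Finset.Iio j ∪ Finset.Ioi j := by
  ext k
  simp only [Finset.mem_erase, Finset.mem_univ, and_true, Finset.mem_union,
    Finset.mem_Iio, Finset.mem_Ioi]
  exact (lt_or_lt_iff_ne).symm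

private lemma prod_swap' {n : ℕ} (f : Fin n → Fin n → ℂ) :
    (∏ j : Fin n, ∏ k ∈ Finset.Iio j, f j k) = ∏ i : Fin n, ∏ k ∈ Finset.Ioi i, f k i :=
  Finset.prod_comm' (by simp [Finset.mem_Iio, Finset.mem_Ioi])

private lemma det_rev_vandermonde {n : ℕ} (a : Fin n → ℂ) :
    Matrix.det (Matrix.of fun l i : Fin n => a l ^ (n - 1 - (i : ℕ))) =
      ∏ i : Fin n, ∏ k ∈ Finset.Ioi i, (a i - a k) := by
  have key : ∀ b : Fin n → ℂ, (∀ l, b l ≠ 0) →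
      Matrix.det (Matrix.of fun l i : Fin n => b l ^ (n - 1 - (i:ℕ))) =
        ∏ i : Fin n, ∏ k ∈ Finset.Ioi i, (b i - b k) := by
    intro b hb
    have h1 : (Matrix.of fun l i : Fin n => b l ^ (n - 1 - (i:ℕ)))
        = Matrix.of fun l i : Fin n =>
            (b l ^ (n-1)) * (vandermonde (fun l => (b l)⁻¹) l i) := by
      ext l i
      simp only [of_apply, vandermonde_apply]
      rw [inv_pow, pow_sub₀ _ (hb l) (by omega : (i:ℕ) ≤ n - 1)]
    rw [h1, det_mul_column, det_vandermonde]
    have h2 : (∏ l : Fin n, b l ^ (n-1)) = ∏ i : Fin n, ∏ k ∈ Finset.Ioi i, (b i * b k) := by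
    { calc (∏ l : Fin n, b l ^ (n-1))
          = ∏ l : Fin n, b l ^ (#(Finset.Ioi l) + #(Finset.Iio l)) := by
            apply Finset.prod_congr rfl
            intro l _
            congr 1
            rw [Fin.card_Ioi, Fin.card_Iio]
            omega
        _ = (∏ l : Fin n, b l ^ (#(Finset.Ioi l))) * ∏ l : Fin n, b l ^ (#(Finset.Iio l)) := by
            rw [← Finset.prod_mul_distrib]
            exact Finset.prod_congr rfl fun l _ => pow_add _ _ _
        _ = (∏ l : Fin n, ∏ k ∈ Finset.Ioi l, b l) * ∏ l : Fin n, ∏ k ∈ Finset.Iio l, b l := by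
            simp [Finset.prod_const]
        _ = (∏ l : Fin n, ∏ k ∈ Finset.Ioi l, b l) * ∏ l : Fin n, ∏ k ∈ Finset.Ioi l, b k := by
            rw [prod_swap' (fun j k => b j)]
        _ = ∏ i : Fin n, ∏ k ∈ Finset.Ioi i, (b i * b k) := by
            rw [← Finset.prod_mul_distrib]
            exact Finset.prod_congr rfl fun l _ => (Finset.prod_mul_distrib).symm }
    rw [h2, ← Finset.prod_mul_distrib]
    apply Finset.prod_congr rfl
    intro i _
    rw [← Finset.prod_mul_distrib]
    apply Finset.prod_congr rfl
    intro k hk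
    have hbi := hb i; have hbk := hb k
    field_simp
  obtain ⟨c, hc⟩ := Infinite.exists_notMem_finset (Finset.image (fun l => -a l) Finset.univ)
  have hball : ∀ l, a l + c ≠ 0 := by
    intro l h
    exact hc (Finset.mem_image.mpr ⟨l, Finset.mem_univ l, by linear_combination -h⟩)
  have hsub : ∀ (v : Fin n → ℂ), (Matrix.of fun l i : Fin n => v l ^ (n - 1 - (i:ℕ)))
      = (vandermonde v).submatrix id Fin.revPerm := by
    intro v; ext l i
    simp only [submatrix_apply, of_apply, vandermonde_apply, Fin.revPerm_apply, Fin.val_rev, id]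
    congr 1
    omega
  have e1 := key (fun l => a l + c) hball
  rw [hsub, det_permute', ← det_vandermonde_add a c, ← det_permute' Fin.revPerm, ← hsub] at *
  rw [e1]
  apply Finset.prod_congr rfl
  intro i _
  exact Finset.prod_congr rfl fun k _ => by ring

private lemma sum_esymm_eval {n : ℕ} (hn : 1 ≤ n) (a : Fin n → ℂ) (x : ℂ) (j : Fin n) :
    ∑ i : Fin n, ((-1:ℂ)^(i:ℕ) * x ^ (n-1-(i:ℕ))) *
        ((((Finset.univ : Finset (Fin n)).erase j).val.map a).esymm i)
      = ∏ k ∈ (Finset.univ : Finset (Fin n)).erase j, (x - a k) := by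
  set s : Multiset ℂ := (((Finset.univ : Finset (Fin n)).erase j).val.map a) with hs
  have hcard : Multiset.card s = n - 1 := by
    simp [hs, Finset.card_erase_of_mem]
  have h := congrArg (Polynomial.eval x) (Multiset.prod_X_sub_X_eq_sum_esymm s)
  rw [Polynomial.eval_multiset_prod, Multiset.map_map, Polynomial.eval_finset_sum, hcard,
    Nat.sub_add_cancel hn] at h
  simp only [Function.comp, eval_sub, eval_X, eval_C, eval_mul, eval_pow, eval_neg, eval_one] at h
  calc ∑ i : Fin n, ((-1:ℂ)^(i:ℕ) * x ^ (n-1-(i:ℕ))) * (s.esymm i)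
      = ∑ i ∈ Finset.range n, ((-1:ℂ)^i * x ^ (n-1-i)) * (s.esymm i) :=
        Fin.sum_univ_eq_sum_range (fun i => ((-1:ℂ)^i * x ^ (n-1-i)) * s.esymm i) n
    _ = ∑ i ∈ Finset.range n, (-1:ℂ)^i * (s.esymm i * x ^ (n-1-i)) := by
        apply Finset.sum_congr rfl; intro i _; ring
    _ = (s.map fun t => x - t).prod := h.symm
    _ = ∏ k ∈ (Finset.univ : Finset (Fin n)).erase j, (x - a k) := by
        rw [Finset.prod_eq_multiset_prod, hs, Multiset.map_map]
        rfl

/-- The Vieta matrix of `a : Fin n → ℂ`: its `(i, j)` entry is the elementary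
symmetric polynomial of degree `i` evaluated at the numbers `a k` for `k ≠ j`. -/
noncomputable def vietaMatrix (n : ℕ) (a : Fin n → ℂ) : Matrix (Fin n) (Fin n) ℂ :=
  Matrix.of fun i j => ((Finset.univ.erase j).val.map a).esymm i

theorem vieta_det (n : ℕ) (hn : 1 ≤ n) (a : Fin n → ℂ) :
    (vietaMatrix n a).det = ∏ i : Fin n, ∏ k ∈ Finset.Ioi i, (a i - a k) := by
  set P := ∏ i : Fin n, ∏ k ∈ Finset.Ioi i, (a i - a k) with hP
  by_cases hinj : Function.Injective a
  · set W : Matrix (Fin n) (Fin n) ℂ :=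
      Matrix.of fun l i => (-1:ℂ)^(i:ℕ) * a l ^ (n-1-(i:ℕ)) with hW
    have hWM : W * vietaMatrix n a
        = Matrix.diagonal (fun j => ∏ k ∈ Finset.univ.erase j, (a j - a k)) := by
      ext l j
      rw [Matrix.mul_apply]
      have hsum : ∑ i, W l i * vietaMatrix n a i j
          = ∏ k ∈ Finset.univ.erase j, (a l - a k) := by
        simpa [hW, vietaMatrix] using sum_esymm_eval hn a (a l) j
      rw [hsum]
      by_cases hlj : l = j
      · subst hlj; simp [Matrix.diagonal]
      · rw [Matrix.diagonal_apply_ne _ hlj]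
        exact Finset.prod_eq_zero (Finset.mem_erase.mpr ⟨hlj, Finset.mem_univ l⟩) (sub_self _)
    have hdet := congrArg Matrix.det hWM
    rw [Matrix.det_mul, Matrix.det_diagonal] at hdet
    have hdetW : W.det = (∏ i : Fin n, (-1:ℂ)^(i:ℕ)) * P := by
      have h0 : W = Matrix.of fun l i : Fin n => ((fun i : Fin n => (-1:ℂ)^(i:ℕ)) i) *
          ((Matrix.of fun l i : Fin n => a l ^ (n-1-(i:ℕ))) l i) := rfl
      rw [h0, Matrix.det_mul_row, det_rev_vandermonde, hP]
    have hsign : (∏ i : Fin n, (-1:ℂ)^(n-1-(i:ℕ))) = ∏ i : Fin n, (-1:ℂ)^(i:ℕ) := by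
      rw [Fin.prod_univ_eq_prod_range (fun i => (-1:ℂ)^(n-1-i)) n,
        Fin.prod_univ_eq_prod_range (fun i => (-1:ℂ)^i) n]
      exact Finset.prod_range_reflect (fun i => (-1:ℂ)^i) n
    have hdiag : (∏ j : Fin n, ∏ k ∈ Finset.univ.erase j, (a j - a k))
        = ((∏ i : Fin n, (-1:ℂ)^(i:ℕ)) * P) * P := by
      calc ∏ j : Fin n, ∏ k ∈ Finset.univ.erase j, (a j - a k)
          = ∏ j : Fin n, ((∏ k ∈ Finset.Iio j, (a j - a k)) * ∏ k ∈ Finset.Ioi j, (a j - a k)) := by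
            apply Finset.prod_congr rfl; intro j _
            rw [erase_split, Finset.prod_union ((Finset.disjoint_Ioi_Iio j).symm)]
        _ = (∏ j : Fin n, ∏ k ∈ Finset.Iio j, (a j - a k)) * P := Finset.prod_mul_distrib
        _ = (∏ i : Fin n, ∏ k ∈ Finset.Ioi i, (a k - a i)) * P := by
            rw [prod_swap' (fun j k => a j - a k)]
        _ = ((∏ i : Fin n, (-1:ℂ)^(n-1-(i:ℕ))) * P) * P := by
            congr 1
            rw [hP, Finset.prod_mul_distrib.symm]
            apply Finset.prod_congr rfl
            intro i _
            calc ∏ k ∈ Finset.Ioi i, (a k - a i)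
                = ∏ k ∈ Finset.Ioi i, ((-1) * (a i - a k)) := by
                  apply Finset.prod_congr rfl; intro k _; ring
              _ = (-1:ℂ)^(n-1-(i:ℕ)) * ∏ k ∈ Finset.Ioi i, (a i - a k) := by
                  rw [Finset.prod_mul_distrib, Finset.prod_const, Fin.card_Ioi]
        _ = ((∏ i : Fin n, (-1:ℂ)^(i:ℕ)) * P) * P := by rw [hsign]
    rw [hdetW, hdiag] at hdet
    have hPne : P ≠ 0 := by
      rw [hP]
      apply Finset.prod_ne_zero_iff.mpr
      intro i _
      apply Finset.prod_ne_zero_iff.mpr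
      intro k hk
      exact sub_ne_zero_of_ne fun h => (Finset.mem_Ioi.mp hk).ne' (hinj h.symm)
    have hSne : (∏ i : Fin n, (-1:ℂ)^(i:ℕ)) * P ≠ 0 := by
      apply mul_ne_zero _ hPne
      apply Finset.prod_ne_zero_iff.mpr
      intro i _
      exact pow_ne_zero _ (by norm_num)
    exact mul_left_cancel₀ hSne hdet
  · rw [Function.not_injective_iff] at hinj
    obtain ⟨i0, k0, hval, hne⟩ := hinj
    have hPz : P = 0 := by
      rcases hne.lt_or_gt with h | h
      · exact Finset.prod_eq_zero (Finset.mem_univ i0)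
          (Finset.prod_eq_zero (Finset.mem_Ioi.mpr h) (by rw [hval, sub_self]))
      · exact Finset.prod_eq_zero (Finset.mem_univ k0)
          (Finset.prod_eq_zero (Finset.mem_Ioi.mpr h) (by rw [← hval, sub_self]))
    rw [hPz]
    apply Matrix.det_zero_of_column_eq hne
    intro i
    have hm : (((Finset.univ : Finset (Fin n)).erase i0).val.map a)
        = (((Finset.univ : Finset (Fin n)).erase k0).val.map a) := by
      have h1 : a i0 ::ₘ (((Finset.univ : Finset (Fin n)).erase i0).val.map a)
          = (Finset.univ : Finset (Fin n)).val.map a := by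
        rw [Finset.erase_val, ← Multiset.map_cons,
          Multiset.cons_erase (Finset.mem_def.mp (Finset.mem_univ i0))]
      have h2 : a k0 ::ₘ (((Finset.univ : Finset (Fin n)).erase k0).val.map a)
          = (Finset.univ : Finset (Fin n)).val.map a := by
        rw [Finset.erase_val, ← Multiset.map_cons,
          Multiset.cons_erase (Finset.mem_def.mp (Finset.mem_univ k0))]
      rw [hval] at h1
      exact (Multiset.cons_inj_right _).mp (h1.trans h2.symm)
    simp only [vietaMatrix, Matrix.of_apply, hm]
end

section
/- For complex numbers a_1, …, a_n, the determinant of the (n+1)×(n+1) Vieta matrix of the n+1 numbers a_1, …, a_n, 0 equals (a_1 a_2 ⋯ a_n) times the determinant of the n×n Vieta matrix of a_1, …, a_n. -/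
lemma esymm_cons_zero (s : Multiset ℂ) (k : ℕ) :
    ((0 : ℂ) ::ₘ s).esymm k = s.esymm k := by
  cases k with
  | zero => simp [Multiset.esymm, Multiset.powersetCard_zero_left]
  | succ k =>
    simp only [Multiset.esymm, Multiset.powersetCard_cons, Multiset.map_add,
      Multiset.sum_add, Multiset.map_map, Function.comp]
    simp

lemma esymm_of_card_lt (s : Multiset ℂ) (k : ℕ) (h : Multiset.card s < k) :
    s.esymm k = 0 := by
  obtain ⟨i, hi, rfl⟩ : ∃ i, 0 < i ∧ k = Multiset.card s + i :=
    ⟨k - Multiset.card s, by omega, by omega⟩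
  rw [Multiset.esymm, Multiset.powersetCard_card_add s hi]
  simp

lemma esymm_card (s : Multiset ℂ) : s.esymm (Multiset.card s) = s.prod := by
  induction s using Multiset.induction with
  | empty => simp [Multiset.esymm, Multiset.powersetCard_zero_left]
  | cons b s ih =>
    rw [Multiset.card_cons, Multiset.esymm, Multiset.powersetCard_cons,
      Multiset.powersetCard_card_add s one_pos]
    simp only [Multiset.map_add, Multiset.sum_add, Multiset.map_map, Function.comp,
      Multiset.prod_cons, zero_add, Multiset.map_zero, Multiset.sum_zero]
    rw [Multiset.sum_map_mul_left, ← Multiset.esymm, ih]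

lemma univ_val_castSucc (n : ℕ) :
    (Finset.univ : Finset (Fin (n + 1))).val
      = Fin.last n ::ₘ ((Finset.univ : Finset (Fin n)).val.map Fin.castSucc) := by
  rw [Fin.univ_castSuccEmb]
  rfl

lemma erase_castSucc_map (n : ℕ) (a : Fin n → ℂ) (j : Fin n) :
    ((Finset.univ.erase (Fin.castSucc j)).val.map (Fin.snoc a 0 : Fin (n + 1) → ℂ))
      = (0 : ℂ) ::ₘ ((Finset.univ.erase j).val.map a) := by
  rw [Finset.erase_val, Finset.erase_val, univ_val_castSucc,
    Multiset.erase_cons_tail _ (by simp [Fin.ext_iff, (Fin.castSucc_lt_last j).ne']),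
    ← Multiset.map_erase _ (Fin.castSucc_injective n) j, Multiset.map_cons,
    Fin.snoc_last, Multiset.map_map]
  congr 1
  apply Multiset.map_congr rfl
  intro x _
  simp [Fin.snoc_castSucc]

lemma erase_last_map (n : ℕ) (a : Fin n → ℂ) :
    ((Finset.univ.erase (Fin.last n)).val.map (Fin.snoc a 0 : Fin (n + 1) → ℂ))
      = (Finset.univ : Finset (Fin n)).val.map a := by
  rw [Finset.erase_val, univ_val_castSucc, Multiset.erase_cons_head, Multiset.map_map]
  apply Multiset.map_congr rfl
  intro x _
  simp [Fin.snoc_castSucc]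

theorem vieta_det_snoc_zero (n : ℕ) (hn : 1 ≤ n) (a : Fin n → ℂ) :
    (vietaMatrix (n + 1) (Fin.snoc a 0)).det
      = (∏ i : Fin n, a i) * (vietaMatrix n a).det := by
  set M := vietaMatrix (n + 1) (Fin.snoc a 0) with hM
  have hcard : ∀ j : Fin n, Multiset.card ((Finset.univ.erase j).val.map a) = n - 1 := by
    intro j
    simp [Finset.card_erase_of_mem]
  have hrow : ∀ j : Fin n, M (Fin.last n) (Fin.castSucc j) = 0 := by
    intro j
    show ((Finset.univ.erase (Fin.castSucc j)).val.map (Fin.snoc a 0)).esymm (Fin.last n) = 0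
    rw [erase_castSucc_map, esymm_cons_zero]
    exact esymm_of_card_lt _ _ (by rw [hcard]; simp [Fin.last]; omega)
  have hcorner : M (Fin.last n) (Fin.last n) = ∏ i : Fin n, a i := by
    show ((Finset.univ.erase (Fin.last n)).val.map (Fin.snoc a 0)).esymm (Fin.last n) = _
    rw [erase_last_map]
    have hc : Multiset.card ((Finset.univ : Finset (Fin n)).val.map a) = n := by simp
    have h2 := esymm_card ((Finset.univ : Finset (Fin n)).val.map a)
    rw [hc] at h2
    rw [Fin.val_last, h2]
    simp [Finset.prod]
  have hsub : M.submatrix Fin.castSucc Fin.castSucc = vietaMatrix n a := by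
    ext i j
    show ((Finset.univ.erase (Fin.castSucc j)).val.map (Fin.snoc a 0)).esymm (Fin.castSucc i) = _
    rw [erase_castSucc_map, esymm_cons_zero]
    rfl
  rw [Matrix.det_succ_row M (Fin.last n)]
  rw [Finset.sum_eq_single (Fin.last n)]
  · rw [hcorner, Fin.succAbove_last, hsub]
    rw [Even.neg_one_pow ⟨(Fin.last n : ℕ), rfl⟩, one_mul]
  · intro j _ hj
    obtain ⟨k, rfl⟩ := Fin.exists_castSucc_eq.mpr hj
    rw [hrow k]
    ring
  · intro h
    exact absurd (Finset.mem_univ _) h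
end

section
/- Let a_1, …, a_n be complex numbers and for each j ∈ {1, …, n} let p_j(x) = ∏_{i ≠ j} (x − a_i) ∈ ℂ[X]. Then the Wronskian determinant of p_1, …, p_n, namely the determinant of the n×n matrix whose (i, j) entry is the i-th derivative p_j^{(i)} for i ∈ {0, 1, …, n−1}, is the constant polynomial (∏_{k=0}^{n−1} k!) · ∏_{1 ≤ i < k ≤ n} (a_i − a_k). -/
open Polynomial Matrix Finset

private lemma iter_deriv_sum {ι : Type*} (s : Finset ι) (f : ι → Polynomial ℂ) (k : ℕ) :
    derivative^[k] (∑ i ∈ s, f i) = ∑ i ∈ s, derivative^[k] (f i) := by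
  induction k with
  | zero => simp
  | succ k ih => rw [Function.iterate_succ_apply', ih, derivative_sum]
                 exact Finset.sum_congr rfl fun i _ => (Function.iterate_succ_apply' _ _ _).symm

theorem wronskian_of_vieta_polynomials (n : ℕ) (hn : 1 ≤ n) (a : Fin n → ℂ)
    (p : Fin n → Polynomial ℂ)
    (hp : ∀ j : Fin n, p j = ∏ i ∈ Finset.univ.erase j, (Polynomial.X - Polynomial.C (a i))) :
    (Matrix.of fun i j : Fin n => (Polynomial.derivative^[(i : ℕ)] (p j))).det
      = Polynomial.C
          ((∏ k ∈ Finset.range n, (Nat.factorial k : ℂ)) *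
            ∏ i : Fin n, ∏ k ∈ Finset.Ioi i, (a i - a k)) := by
  by_cases hinj : Function.Injective a
  · -- main case: a injective
    have hdeg : ∀ j, (p j).natDegree < n := by
      intro j
      rw [hp j]
      have h1 : (∏ i ∈ Finset.univ.erase j, (X - C (a i))).natDegree
          = (Finset.univ.erase j).card := by
        rw [Polynomial.natDegree_prod_of_monic _ _ (fun i _ => monic_X_sub_C _)]
        simp [Polynomial.natDegree_X_sub_C]
      rw [h1, Finset.card_erase_of_mem (Finset.mem_univ j), Finset.card_univ, Fintype.card_fin]
      omega
    set D : Matrix (Fin n) (Fin n) (Polynomial ℂ) :=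
      Matrix.of fun i k : Fin n => derivative^[(i : ℕ)] (X ^ (k : ℕ)) with hD
    set Cm : Matrix (Fin n) (Fin n) ℂ :=
      Matrix.of fun k j : Fin n => (p j).coeff k with hCm
    have hW : (Matrix.of fun i j : Fin n => (derivative^[(i : ℕ)] (p j)))
        = D * Cm.map Polynomial.C := by
      refine Matrix.ext fun i j => ?_
      simp only [Matrix.mul_apply, Matrix.map_apply, Matrix.of_apply, hD, hCm]
      have hpj : p j = ∑ k : Fin n, (monomial (k : ℕ)) ((p j).coeff k) := by
        rw [Fin.sum_univ_eq_sum_range (fun k => (monomial k) ((p j).coeff k)) n]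
        exact (p j).as_sum_range' n (hdeg j)
      conv_lhs => rw [hpj]
      rw [iter_deriv_sum]
      refine Finset.sum_congr rfl fun k _ => ?_
      rw [← Polynomial.C_mul_X_pow_eq_monomial, Polynomial.iterate_derivative_C_mul]
      ring
    have hDdet : D.det = Polynomial.C (∏ k ∈ Finset.range n, (Nat.factorial k : ℂ)) := by
      have htri : D.BlockTriangular id := by
        intro i k hki
        simp only [hD, Matrix.of_apply, Polynomial.iterate_derivative_X_pow_eq_C_mul]
        have h0 : (k : ℕ).descFactorial (i : ℕ) = 0 :=
          Nat.descFactorial_eq_zero_iff_lt.mpr hki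
        rw [h0]
        simp
      rw [Matrix.det_of_upperTriangular htri]
      rw [← Fin.prod_univ_eq_prod_range (fun k => (Nat.factorial k : ℂ)), map_prod]
      refine Finset.prod_congr rfl fun i _ => ?_
      simp [hD, Polynomial.iterate_derivative_X_pow_eq_C_mul, Nat.descFactorial_self]
    have hVC : Matrix.vandermonde a * Cm
        = Matrix.diagonal (fun j => ∏ l ∈ Finset.univ.erase j, (a j - a l)) := by
      ext i j
      have heval : ∑ k : Fin n, a i ^ (k : ℕ) * (p j).coeff k = (p j).eval (a i) := by
        rw [Polynomial.eval_eq_sum_range' (hdeg j),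
          ← Fin.sum_univ_eq_sum_range (fun k => (p j).coeff k * a i ^ k)]
        exact Finset.sum_congr rfl fun k _ => by ring
      simp only [Matrix.mul_apply, Matrix.vandermonde_apply, hCm, Matrix.of_apply]
      rw [heval, hp j, Polynomial.eval_prod]
      by_cases h : i = j
      · subst h
        rw [Matrix.diagonal_apply_eq]
        exact Finset.prod_congr rfl fun l _ => by simp
      · rw [Matrix.diagonal_apply_ne _ h]
        refine Finset.prod_eq_zero (Finset.mem_erase.mpr ⟨h, Finset.mem_univ i⟩) ?_
        simp
    have hsplit : ∀ j : Fin n, Finset.univ.erase j = Finset.Iio j ∪ Finset.Ioi j := by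
      intro j
      ext l
      simp only [Finset.mem_erase, Finset.mem_univ, and_true, Finset.mem_union,
        Finset.mem_Iio, Finset.mem_Ioi]
      exact ne_iff_lt_or_gt
    have hdiag : ∏ j : Fin n, ∏ l ∈ Finset.univ.erase j, (a j - a l)
        = (∏ i : Fin n, ∏ k ∈ Finset.Ioi i, (a k - a i)) *
          ∏ i : Fin n, ∏ k ∈ Finset.Ioi i, (a i - a k) := by
      have h1 : ∀ j : Fin n, ∏ l ∈ Finset.univ.erase j, (a j - a l)
          = (∏ l ∈ Finset.Iio j, (a j - a l)) * ∏ l ∈ Finset.Ioi j, (a j - a l) := by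
        intro j
        rw [hsplit j, Finset.prod_union]
        refine Finset.disjoint_left.mpr fun x hx hx' => ?_
        rw [Finset.mem_Iio] at hx; rw [Finset.mem_Ioi] at hx'
        exact absurd (hx.trans hx') (lt_irrefl _)
      rw [Finset.prod_congr rfl fun j _ => h1 j, Finset.prod_mul_distrib]
      congr 1
      exact Finset.prod_comm' (by simp)
    have hVdet : (Matrix.vandermonde a).det ≠ 0 :=
      Matrix.det_vandermonde_ne_zero_iff.mpr hinj
    have hCmdet : Cm.det = ∏ i : Fin n, ∏ k ∈ Finset.Ioi i, (a i - a k) := by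
      have := congrArg Matrix.det hVC
      rw [Matrix.det_mul, Matrix.det_diagonal, hdiag, ← Matrix.det_vandermonde] at this
      exact mul_left_cancel₀ hVdet this
    have hmapdet : (Cm.map ⇑Polynomial.C).det = Polynomial.C Cm.det :=
      (RingHom.map_det Polynomial.C Cm).symm
    rw [hW, Matrix.det_mul, hDdet, hmapdet, hCmdet, ← Polynomial.C_mul]
  · -- degenerate case: two a's coincide
    simp only [Function.Injective, not_forall, Classical.not_imp] at hinj
    obtain ⟨i, j, hij, hne⟩ := hinj
    have hpij : p i = p j := by
      rw [hp i, hp j,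
        ← Finset.mul_prod_erase _ _ (Finset.mem_erase.mpr ⟨Ne.symm hne, Finset.mem_univ j⟩),
        ← Finset.mul_prod_erase _ _ (Finset.mem_erase.mpr ⟨hne, Finset.mem_univ i⟩),
        Finset.erase_right_comm, hij]
    have hlhs : (Matrix.of fun i j : Fin n => (derivative^[(i : ℕ)] (p j))).det = 0 :=
      Matrix.det_zero_of_column_eq hne (fun k => by simp [hpij])
    have hrhs : (∏ i : Fin n, ∏ k ∈ Finset.Ioi i, (a i - a k)) = 0 := by
      rcases lt_or_gt_of_ne hne with h | h
      · refine Finset.prod_eq_zero (Finset.mem_univ i)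
          (Finset.prod_eq_zero (Finset.mem_Ioi.mpr h) ?_)
        rw [hij]; ring
      · refine Finset.prod_eq_zero (Finset.mem_univ j)
          (Finset.prod_eq_zero (Finset.mem_Ioi.mpr h) ?_)
        rw [hij]; ring
    rw [hlhs, hrhs, mul_zero, map_zero]
end

section
/- Let e_1, …, e_n denote the elementary symmetric polynomials in the variables X_1, …, X_n over ℂ, where e_i has degree i. Then the Jacobian determinant of (e_1, …, e_n), namely the determinant of the n×n matrix whose (i, j) entry is the partial derivative ∂e_i/∂X_j, equals ∏_{1 ≤ i < k ≤ n} (X_i − X_k) as a multivariate polynomial. -/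
open MvPolynomial Finset Matrix Equiv

section Aux

lemma aux_revPerm_succ (n : ℕ) :
    (Fin.revPerm : Perm (Fin (n + 1))) =
      Equiv.Perm.decomposeFin.symm (Fin.last n, Fin.revPerm * finRotate n) := by
  ext i
  refine Fin.cases ?_ (fun x => ?_) i
  · simp
  · rw [Equiv.Perm.decomposeFin_symm_apply_succ, Equiv.Perm.mul_apply]
    rcases n with _ | m
    · exact x.elim0
    by_cases hx : x = Fin.last m
    · subst hx
      simp [Fin.rev_zero, Fin.succ_last, Equiv.swap_apply_right, Fin.ext_iff, Fin.val_rev]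
    · have hx' : (x : ℕ) < m := Fin.val_lt_last hx
      have h1 : finRotate (m+1) x = ⟨(x : ℕ) + 1, by omega⟩ := by
        apply Fin.ext; rw [coe_finRotate, if_neg hx]
      rw [h1]
      have h2 : Fin.revPerm (⟨(x : ℕ) + 1, by omega⟩ : Fin (m+1)) = ⟨m - ((x:ℕ) + 1), by omega⟩ := by
        apply Fin.ext; simp [Fin.val_rev]
      rw [h2]
      rw [Equiv.swap_apply_of_ne_of_ne]
      · simp [Fin.val_rev]; omega
      · simp [Fin.ext_iff]
      · simp [Fin.ext_iff]; omega

lemma aux_sign_revPerm (n : ℕ) :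
    Equiv.Perm.sign (Fin.revPerm : Perm (Fin n)) = (-1) ^ (n * (n - 1) / 2) := by
  induction n with
  | zero => simp [Subsingleton.elim (Fin.revPerm : Perm (Fin 0)) 1]
  | succ m ih =>
    rcases Nat.eq_zero_or_pos m with rfl | hm
    · rw [Subsingleton.elim (Fin.revPerm : Perm (Fin 1)) 1]; simp
    · obtain ⟨k, rfl⟩ := Nat.exists_eq_succ_of_ne_zero hm.ne'
      rw [aux_revPerm_succ]
      simp only [Nat.succ_eq_add_one] at ih ⊢
      rw [Equiv.Perm.decomposeFin.symm_sign, if_neg (by simp [Fin.ext_iff]), _root_.map_mul,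
        sign_finRotate, ih]
      have h2 : (k+1+1) * (k+1+1-1) / 2 = (k+1) * (k+1-1)/2 + (k + 1) := by
        simp only [Nat.add_sub_cancel]
        have : (k+2) * (k+1) = (k+1)*k + 2*(k+1) := by ring
        rw [this, Nat.add_mul_div_left _ _ (by norm_num : 0 < 2)]
      rw [h2, pow_add, pow_succ, mul_comm (-1 : ℤˣ) _, mul_assoc, Nat.add_sub_cancel]

lemma aux_pderiv_prod_X {n : ℕ} (S : Finset (Fin n)) (j : Fin n) :
    pderiv j (∏ i ∈ S, X i : MvPolynomial (Fin n) ℂ) =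
      if j ∈ S then ∏ i ∈ S.erase j, X i else 0 := by
  induction S using Finset.induction_on with
  | empty => simp
  | @insert a S ha ih =>
    rw [Finset.prod_insert ha, pderiv_mul, ih, pderiv_X]
    by_cases hj : j = a
    · subst hj
      rw [if_neg ha, Pi.single_eq_same, if_pos (mem_insert_self _ _), Finset.erase_insert ha]
      simp
    · rw [Pi.single_eq_of_ne (Ne.symm hj)]
      by_cases hjS : j ∈ S
      · rw [if_pos hjS, if_pos (mem_insert_of_mem hjS),
          Finset.erase_insert_of_ne (Ne.symm hj),
          Finset.prod_insert (fun h => ha (Finset.mem_of_mem_erase h))]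
        simp
      · rw [if_neg hjS, if_neg (by simp [hj, hjS])]
        simp

lemma aux_pderiv_esymm {n : ℕ} (m : ℕ) (j : Fin n) :
    pderiv j (esymm (Fin n) ℂ (m + 1)) =
      ∑ T ∈ (Finset.univ.erase j).powersetCard m, ∏ i ∈ T, (X i : MvPolynomial (Fin n) ℂ) := by
  rw [esymm, map_sum]
  simp_rw [aux_pderiv_prod_X]
  rw [Finset.sum_ite, Finset.sum_const_zero, add_zero]
  refine Finset.sum_bij' (fun S _ => S.erase j) (fun T _ => insert j T) ?_ ?_ ?_ ?_ ?_
  · intro S hS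
    simp only [Finset.mem_filter, Finset.mem_powersetCard] at hS
    simp only [Finset.mem_powersetCard]
    refine ⟨fun x hx => Finset.mem_erase.mpr ⟨(Finset.mem_erase.mp hx).1, Finset.mem_univ _⟩, ?_⟩
    rw [Finset.card_erase_of_mem hS.2, hS.1.2]
    omega
  · intro T hT
    simp only [Finset.mem_powersetCard] at hT
    simp only [Finset.mem_filter, Finset.mem_powersetCard]
    have hjT : j ∉ T := fun h => (Finset.mem_erase.mp (hT.1 h)).1 rfl
    exact ⟨⟨Finset.subset_univ _, by rw [Finset.card_insert_of_notMem hjT, hT.2]⟩,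
      Finset.mem_insert_self _ _⟩
  · intro S hS
    simp only [Finset.mem_filter] at hS
    exact Finset.insert_erase hS.2
  · intro T hT
    simp only [Finset.mem_powersetCard] at hT
    have hjT : j ∉ T := fun h => (Finset.mem_erase.mp (hT.1 h)).1 rfl
    exact Finset.erase_insert hjT
  · intro S hS; rfl

lemma aux_key_sum {n : ℕ} (hn : 1 ≤ n) (j l : Fin n) :
    ∑ i : Fin n, pderiv j (esymm (Fin n) ℂ ((i : ℕ) + 1)) * (- X l) ^ (n - 1 - (i : ℕ)) =
      ∏ k ∈ Finset.univ.erase j, (X k - X l : MvPolynomial (Fin n) ℂ) := by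
  set s : Finset (Fin n) := Finset.univ.erase j with hs
  have hcard : #s = n - 1 := by
    rw [hs, Finset.card_erase_of_mem (Finset.mem_univ j), Finset.card_univ, Fintype.card_fin]
  set P : Polynomial (MvPolynomial (Fin n) ℂ) :=
    ∏ k ∈ s, (Polynomial.X + Polynomial.C (X k : MvPolynomial (Fin n) ℂ)) with hP
  have hdeg : P.natDegree < n := by
    calc P.natDegree
        ≤ ∑ k ∈ s, (Polynomial.X + Polynomial.C (X k : MvPolynomial (Fin n) ℂ)).natDegree :=
          Polynomial.natDegree_prod_le _ _
    _ = ∑ k ∈ s, 1 := Finset.sum_congr rfl fun k _ => Polynomial.natDegree_X_add_C _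
    _ = n - 1 := by rw [Finset.sum_const, smul_eq_mul, mul_one, hcard]
    _ < n := by omega
  have hcoeff : ∀ i : ℕ, i < n →
      P.coeff i = pderiv j (esymm (Fin n) ℂ ((n - 1 - i) + 1)) := by
    intro i hi
    rw [hP, Finset.prod_X_add_C_coeff s X (by omega : i ≤ #s), hcard,
      aux_pderiv_esymm (n - 1 - i) j]
  have heval : P.eval (- X l) = ∏ k ∈ s, (X k - X l) := by
    rw [hP, Polynomial.eval_prod]
    refine Finset.prod_congr rfl fun k _ => ?_
    simp [sub_eq_neg_add]
  rw [← heval, Polynomial.eval_eq_sum_range' hdeg]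
  rw [Fin.sum_univ_eq_sum_range
    (fun i => pderiv j (esymm (Fin n) ℂ (i + 1)) * (- X l) ^ (n - 1 - i)) n]
  rw [← Finset.sum_range_reflect]
  refine Finset.sum_congr rfl fun i hi => ?_
  rw [Finset.mem_range] at hi
  have h1 : n - 1 - (n - 1 - i) = i := by omega
  rw [h1, hcoeff i hi]

lemma aux_Nsum (n : ℕ) : ∑ i : Fin n, #(Finset.Ioi i) = n * (n - 1) / 2 := by
  simp only [Fin.card_Ioi]
  rw [Fin.sum_univ_eq_sum_range (fun i => n - 1 - i) n,
    ← Finset.sum_range_id, ← Finset.sum_range_reflect (fun i => i) n]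

lemma aux_D_det (n : ℕ) :
    (Matrix.diagonal (fun j : Fin n =>
        ∏ k ∈ Finset.univ.erase j, (X k - X j : MvPolynomial (Fin n) ℂ))).det
      = (-1) ^ (n * (n - 1) / 2) *
        (∏ i : Fin n, ∏ k ∈ Finset.Ioi i, (X i - X k : MvPolynomial (Fin n) ℂ)) ^ 2 := by
  rw [Matrix.det_diagonal]
  have key := Finset.prod_prod_Ioi_mul_eq_prod_prod_off_diag
    (fun k j : Fin n => (X k - X j : MvPolynomial (Fin n) ℂ))
  have step : ∏ j : Fin n, ∏ k ∈ Finset.univ.erase j, (X k - X j : MvPolynomial (Fin n) ℂ)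
      = ∏ i : Fin n, ∏ j ∈ Finset.Ioi i, (X j - X i : MvPolynomial (Fin n) ℂ) * (X i - X j) :=
    (Finset.prod_congr rfl fun j _ => Finset.prod_congr
      (Finset.ext fun k => by simp [eq_comm]) fun _ _ => rfl).trans key.symm
  rw [step]
  calc ∏ i : Fin n, ∏ j ∈ Finset.Ioi i, (X j - X i : MvPolynomial (Fin n) ℂ) * (X i - X j)
      = ∏ i : Fin n, ∏ j ∈ Finset.Ioi i,
          (-1 : MvPolynomial (Fin n) ℂ) * (X i - X j) ^ 2 :=
        Finset.prod_congr rfl fun i _ => Finset.prod_congr rfl fun j _ => by ring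
    _ = (∏ i : Fin n, ∏ j ∈ Finset.Ioi i, (-1 : MvPolynomial (Fin n) ℂ)) *
          ∏ i : Fin n, ∏ j ∈ Finset.Ioi i, (X i - X j : MvPolynomial (Fin n) ℂ) ^ 2 := by
        simp_rw [Finset.prod_mul_distrib]
    _ = _ := by
        refine congrArg₂ HMul.hMul ?_ ?_
        · simp_rw [Finset.prod_const]
          rw [Finset.prod_pow_eq_pow_sum, aux_Nsum]
        · rw [← Finset.prod_pow]
          exact Finset.prod_congr rfl fun i _ => Finset.prod_pow _ _ _

lemma aux_B_det (n : ℕ) :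
    (Matrix.of fun i l : Fin n =>
        (- X l : MvPolynomial (Fin n) ℂ) ^ (n - 1 - (i : ℕ))).det
      = (-1) ^ (n * (n - 1) / 2) *
        ∏ i : Fin n, ∏ k ∈ Finset.Ioi i, (X i - X k : MvPolynomial (Fin n) ℂ) := by
  have hsub : (Matrix.of fun i l : Fin n =>
      (- X l : MvPolynomial (Fin n) ℂ) ^ (n - 1 - (i : ℕ)))
      = ((Matrix.vandermonde (fun l : Fin n => (- X l : MvPolynomial (Fin n) ℂ)))ᵀ).submatrix
        Fin.revPerm id := by
    refine Matrix.ext fun i l => ?_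
    simp only [Matrix.of_apply, Matrix.submatrix_apply, Matrix.transpose_apply,
      Matrix.vandermonde_apply, id_eq]
    congr 1
    simp only [Fin.revPerm_apply, Fin.val_rev]
    omega
  rw [hsub, Matrix.det_permute, aux_sign_revPerm, Matrix.det_transpose, Matrix.det_vandermonde]
  push_cast
  congr 1
  refine Finset.prod_congr rfl fun i _ => Finset.prod_congr rfl fun j _ => ?_
  ring

end Aux

theorem jacobian_esymm (n : ℕ) (hn : 1 ≤ n) :
    (Matrix.of fun i j : Fin n =>
        MvPolynomial.pderiv j (MvPolynomial.esymm (Fin n) ℂ ((i : ℕ) + 1))).det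
      = ∏ i : Fin n, ∏ k ∈ Finset.Ioi i,
          (MvPolynomial.X i - MvPolynomial.X k : MvPolynomial (Fin n) ℂ) := by
  have hmul : (Matrix.of fun i j : Fin n =>
        pderiv j (esymm (Fin n) ℂ ((i : ℕ) + 1)))ᵀ *
      (Matrix.of fun i l : Fin n => (- X l : MvPolynomial (Fin n) ℂ) ^ (n - 1 - (i : ℕ)))
      = Matrix.diagonal (fun j : Fin n =>
          ∏ k ∈ Finset.univ.erase j, (X k - X j : MvPolynomial (Fin n) ℂ)) := by
    refine Matrix.ext fun j l => ?_
    rw [Matrix.mul_apply]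
    simp only [Matrix.transpose_apply, Matrix.of_apply]
    rw [aux_key_sum hn j l]
    by_cases h : j = l
    · subst h; rw [Matrix.diagonal_apply_eq]
    · rw [Matrix.diagonal_apply_ne _ h]
      exact Finset.prod_eq_zero
        (Finset.mem_erase.mpr ⟨Ne.symm h, Finset.mem_univ l⟩)
        (sub_self (X l : MvPolynomial (Fin n) ℂ))
  have h := congrArg Matrix.det hmul
  rw [Matrix.det_mul, Matrix.det_transpose, aux_B_det, aux_D_det] at h
  have hVne : ((-1 : MvPolynomial (Fin n) ℂ) ^ (n * (n - 1) / 2) *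
      ∏ i : Fin n, ∏ k ∈ Finset.Ioi i, (X i - X k : MvPolynomial (Fin n) ℂ)) ≠ 0 := by
    apply mul_ne_zero (pow_ne_zero _ (neg_ne_zero.mpr one_ne_zero))
    rw [Finset.prod_ne_zero_iff]
    intro i _
    rw [Finset.prod_ne_zero_iff]
    intro k hk
    refine sub_ne_zero.mpr fun hXX => ?_
    exact absurd (MvPolynomial.X_injective hXX) (ne_of_lt (Finset.mem_Ioi.mp hk))
  have h2 : ((-1 : MvPolynomial (Fin n) ℂ) ^ (n * (n - 1) / 2) *
        ∏ i : Fin n, ∏ k ∈ Finset.Ioi i, (X i - X k : MvPolynomial (Fin n) ℂ)) *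
      (Matrix.of fun i j : Fin n => pderiv j (esymm (Fin n) ℂ ((i : ℕ) + 1))).det
      = ((-1) ^ (n * (n - 1) / 2) *
          ∏ i : Fin n, ∏ k ∈ Finset.Ioi i, (X i - X k : MvPolynomial (Fin n) ℂ)) *
        ∏ i : Fin n, ∏ k ∈ Finset.Ioi i, (X i - X k : MvPolynomial (Fin n) ℂ) := by
    rw [mul_comm _ (Matrix.of fun i j : Fin n =>
      pderiv j (esymm (Fin n) ℂ ((i : ℕ) + 1))).det, h]
    ring
  exact mul_left_cancel₀ hVne h2
end
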